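/- Let H be a complex Hilbert space and (a_q)_{q∈ℤ³} a family of bounded operators on H satisfying the CAR. Then for all k, ℓ ∈ ℤ³∖{0}, p ∈ L_k and q ∈ L_ℓ: [b_p(k), b_q(ℓ)] = 0, [b_p*(k), b_q*(ℓ)] = 0, and [b_p(k), b_q*(ℓ)] = δ_{p,q}·δ_{k,ℓ}·Id + ε_{p,q}(k,ℓ), where ε_{p,q}(k,ℓ) := −( δ_{p,q}·a*_{q−ℓ} a_{p−k} + δ_{p−k,q−ℓ}·a_q* a_p ). Moreover the error operator satisfies ε_{p,q}(ℓ,k) = (ε_{q,p}(k,ℓ))* and ε_{p,p}(k,k) ≤ 0 as a self-adjoint operator. -/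

import Mathlib

open scoped BigOperators
open MeasureTheory

noncomputable section

attribute [local instance] Classical.propDecidable

/-- The momentum lattice `ℤ³`. -/
abbrev Z3 : Type := Fin 3 → ℤ

/-- Squared Euclidean norm `|p|²` of an integer vector, as a real number. -/
def nsq (p : Z3) : ℝ := ∑ i, ((p i : ℝ)) ^ 2

/-- The Fermi ball `B_F = {k ∈ ℤ³ : |k| ≤ k_F}`. -/
def BF (kF : ℝ) : Set Z3 := {k | nsq k ≤ kF ^ 2}

/-- The lens `L_ℓ = B_F^c ∩ (B_F + ℓ)`. -/
def lens (kF : ℝ) (ℓ : Z3) : Set Z3 := {p | p ∉ BF kF ∧ p - ℓ ∈ BF kF}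

/-- The excitation energy `λ_{ℓ,p} = (|p|² − |p−ℓ|²)/2`. -/
def lam (ℓ p : Z3) : ℝ := (nsq p - nsq (p - ℓ)) / 2

/-- The energy gap `e(q) = | |q|² − min_{p ∈ B_F^c} |p|² + 1/2 |`. -/
def efun (kF : ℝ) (q : Z3) : ℝ := |nsq q - sInf (nsq '' (BF kF)ᶜ) + 1 / 2|

variable {H : Type*} [NormedAddCommGroup H] [InnerProductSpace ℂ H] [CompleteSpace H]

local postfix:max "†" => ContinuousLinearMap.adjoint

local notation "⟪" x ", " y "⟫" => @inner ℂ _ _ x y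

/-- The canonical anticommutation relations for a family of bounded operators. -/
def CAR (a : Z3 → H →L[ℂ] H) : Prop :=
  (∀ q q' : Z3, a q * a q' + a q' * a q = 0) ∧
  (∀ q q' : Z3, a q * (a q')† + (a q')† * a q = if q = q' then 1 else 0)

/-- The pair annihilation operator `b_p(k) = a_{p−k} a_p`. -/
def bop (a : Z3 → H →L[ℂ] H) (k p : Z3) : H →L[ℂ] H := a (p - k) * a p

/-- The pair creation operator `b_p^*(k) = a_p^* a_{p−k}^*`. -/
def bopS (a : Z3 → H →L[ℂ] H) (k p : Z3) : H →L[ℂ] H := (a p)† * (a (p - k))†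

/-- The quasi-bosonic commutation error `ε_{p,q}(k,ℓ)`. -/
def epsOp (a : Z3 → H →L[ℂ] H) (k ℓ p q : Z3) : H →L[ℂ] H :=
  -((if p = q then (1 : ℂ) else 0) • ((a (q - ℓ))† * a (p - k))
    + (if p - k = q - ℓ then (1 : ℂ) else 0) • ((a q)† * a p))

/-- Anticommuting operators: pair products commute. -/
lemma acomm_swap {R : Type*} [Ring R] {x y u v : R}
    (hyu : y*u = -(u*y)) (hxu : x*u = -(u*x)) (hyv : y*v = -(v*y)) (hxv : x*v = -(v*x)) :
    x*y*(u*v) = u*v*(x*y) := by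
  calc x*y*(u*v) = x*(y*u)*v := by noncomm_ring
    _ = x*(-(u*y))*v := by rw [hyu]
    _ = -((x*u)*(y*v)) := by noncomm_ring
    _ = -((-(u*x))*(y*v)) := by rw [hxu]
    _ = u*(x*(y*v)) := by noncomm_ring
    _ = u*(x*(-(v*y))) := by rw [hyv]
    _ = -(u*((x*v)*y)) := by noncomm_ring
    _ = -(u*((-(v*x))*y)) := by rw [hxv]
    _ = u*v*(x*y) := by noncomm_ring

/-- Mixed commutator computation in an abstract ring. -/
lemma mixed_comm {R : Type*} [Ring R] {A B C D E1 E2 : R}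
    (hBC : B*C = E1 - C*B) (hAD : A*D = E2 - D*A)
    (hBD : B*D = -(D*B)) (hAC : A*C = -(C*A))
    (h1 : ∀ x : R, E1*x = x*E1) (h2 : ∀ x : R, E2*x = x*E2) :
    A*B*(C*D) - C*D*(A*B) = E1*E2 - (E1*(D*A) + E2*(C*B)) := by
  have key : A*B*(C*D) = E1*E2 - E1*(D*A) - E2*(C*B) + C*D*(A*B) := by
    calc A*B*(C*D) = A*(B*C)*D := by noncomm_ring
      _ = A*(E1 - C*B)*D := by rw [hBC]
      _ = A*E1*D - (A*C)*((B*D)) := by noncomm_ring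
      _ = A*E1*D - (-(C*A))*(-(D*B)) := by rw [hAC, hBD]
      _ = A*E1*D - C*(A*D)*B := by noncomm_ring
      _ = A*E1*D - C*(E2 - D*A)*B := by rw [hAD]
      _ = A*E1*D - C*E2*B + C*D*(A*B) := by noncomm_ring
      _ = E1*A*D - E2*C*B + C*D*(A*B) := by rw [← h1 A, ← h2 C]
      _ = E1*(A*D) - E2*(C*B) + C*D*(A*B) := by noncomm_ring
      _ = E1*(E2 - D*A) - E2*(C*B) + C*D*(A*B) := by rw [hAD]
      _ = E1*E2 - E1*(D*A) - E2*(C*B) + C*D*(A*B) := by noncomm_ring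
  rw [key]; noncomm_ring

set_option maxHeartbeats 1000000 in
/-- Approximate CCR for the pair operators (Lemma `lem:paircomm`). -/
theorem stmt4 {H : Type*} [NormedAddCommGroup H] [InnerProductSpace ℂ H] [CompleteSpace H]
    (kF : ℝ) (hkF : 0 < kF) (a : Z3 → H →L[ℂ] H) (hCAR : CAR a) :
    ∀ k : Z3, k ≠ 0 → ∀ ℓ : Z3, ℓ ≠ 0 → ∀ p ∈ lens kF k, ∀ q ∈ lens kF ℓ,
      (bop a k p * bop a ℓ q - bop a ℓ q * bop a k p = 0) ∧
      (bopS a k p * bopS a ℓ q - bopS a ℓ q * bopS a k p = 0) ∧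
      (bop a k p * bopS a ℓ q - bopS a ℓ q * bop a k p
        = (if p = q ∧ k = ℓ then (1 : H →L[ℂ] H) else 0) + epsOp a k ℓ p q) ∧
      (epsOp a ℓ k p q = (epsOp a k ℓ q p)†) ∧
      (-(epsOp a k k p p)).IsPositive := by
  intro k hk ℓ hℓ p hp q hq
  obtain ⟨hCAR1, hCAR2⟩ := hCAR
  have ha : ∀ s t : Z3, a s * a t = -(a t * a s) := fun s t =>
    eq_neg_of_add_eq_zero_left (hCAR1 s t)
  have has : ∀ s t : Z3, (a s)† * (a t)† = -((a t)† * (a s)†) := by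
    intro s t
    have h := congrArg star (hCAR1 t s)
    simp only [star_add, star_mul, ContinuousLinearMap.star_eq_adjoint, star_zero] at h
    exact eq_neg_of_add_eq_zero_left h
  have hne1 : p ≠ q - ℓ := fun h => hp.1 (h ▸ hq.2)
  have hne2 : p - k ≠ q := fun h => hq.1 (h ▸ hp.2)
  refine ⟨?_, ?_, ?_, ?_, ?_⟩
  · simp only [bop, sub_eq_zero]
    exact acomm_swap (ha _ _) (ha _ _) (ha _ _) (ha _ _)
  · simp only [bopS, sub_eq_zero]
    exact acomm_swap (has _ _) (has _ _) (has _ _) (has _ _)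
  · have hBC : a p * (a q)† = (if p = q then (1 : H →L[ℂ] H) else 0) - (a q)† * a p :=
      eq_sub_of_add_eq (hCAR2 p q)
    have hAD : a (p-k) * (a (q-ℓ))† = (if p - k = q - ℓ then (1 : H →L[ℂ] H) else 0)
        - (a (q-ℓ))† * a (p-k) := eq_sub_of_add_eq (hCAR2 (p-k) (q-ℓ))
    have hBD : a p * (a (q-ℓ))† = -((a (q-ℓ))† * a p) := by
      have := hCAR2 p (q-ℓ); rw [if_neg hne1] at this
      exact eq_neg_of_add_eq_zero_left this
    have hAC : a (p-k) * (a q)† = -((a q)† * a (p-k)) := by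
      have := hCAR2 (p-k) q; rw [if_neg hne2] at this
      exact eq_neg_of_add_eq_zero_left this
    have h1 : ∀ x : H →L[ℂ] H, (if p = q then (1 : H →L[ℂ] H) else 0) * x
        = x * (if p = q then (1 : H →L[ℂ] H) else 0) := by intro x; split_ifs <;> simp
    have h2 : ∀ x : H →L[ℂ] H, (if p - k = q - ℓ then (1 : H →L[ℂ] H) else 0) * x
        = x * (if p - k = q - ℓ then (1 : H →L[ℂ] H) else 0) := by intro x; split_ifs <;> simp
    have key := mixed_comm hBC hAD hBD hAC h1 h2
    simp only [bop, bopS]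
    rw [key, epsOp]
    by_cases hpq : p = q <;> by_cases hkl : p - k = q - ℓ
    · have : k = ℓ := by subst hpq; exact sub_right_injective hkl
      simp [hpq, hkl, this, sub_eq_add_neg]
    · have : ¬ (k = ℓ) := fun h => hkl (by rw [hpq, h])
      simp [hpq, hkl, this]
    · simp [hpq, hkl]
    · simp [hpq, hkl]
  · by_cases hpq : p = q <;> by_cases h2 : p - ℓ = q - k <;>
      simp [epsOp, hpq, h2, eq_comm, ← ContinuousLinearMap.star_eq_adjoint, star_mul,
        sub_eq_add_neg] <;> split_ifs <;> simp [star_mul]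
  · have hpos : ∀ x : Z3, ((a x)† * a x).IsPositive := by
      intro x
      have h := ContinuousLinearMap.isPositive_one.adjoint_conj (a x)
      simpa only [ContinuousLinearMap.one_def, ContinuousLinearMap.comp_id, ContinuousLinearMap.id_comp, ContinuousLinearMap.mul_def] using h
    have : -(epsOp a k k p p) = ((a (p-k))† * a (p-k)) + ((a p)† * a p) := by
      simp [epsOp]
    rw [this]
    exact (hpos _).add (hpos _)
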